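/- Let θ > 0 and let (a,b) = ({a_j},{b_j}) be a solution of the inviscid dyadic MHD model on [0,∞) with componentwise positive initial data: a_j(0) > 0 and b_j(0) > 0 for all j ≥ 0. Then for every s > θ/3 the solution blows up in finite time in H^s: there exists a finite time T such that sup_{0 ≤ t < T} (‖a(t)‖_{H^s} + ‖b(t)‖_{H^s}) = ∞. -/

import Mathlib

open MeasureTheory Filter
open scoped ENNReal

private lemma rpow_pow_comm {lam : ℝ} (hlam : 0 < lam) (x : ℝ) (j : ℕ) :
    ((lam ^ j : ℝ)) ^ x = (lam ^ x) ^ j := by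
  rw [← Real.rpow_natCast lam j, ← Real.rpow_natCast (lam ^ x) j,
    ← Real.rpow_mul hlam.le, ← Real.rpow_mul hlam.le, mul_comm]

private lemma geom_summable {lam x : ℝ} (hlam : 1 < lam) (hx : x < 0) :
    Summable (fun j : ℕ => (lam ^ x) ^ j) :=
  summable_geometric_of_lt_one (Real.rpow_nonneg (by linarith) x)
    (Real.rpow_lt_one_of_one_lt_of_neg hlam hx)

private lemma summable_of_bound {lam x : ℝ} (hlam : 1 < lam) (hx : x < 0)
    {c : ℕ → ℝ} {m : ℝ} (hc : ∀ j, |c j| ≤ m * (lam ^ x) ^ j) : Summable c :=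
  Summable.of_norm_bounded ((geom_summable hlam hx).mul_left m) hc

private lemma tsum_cs (u v : ℕ → ℝ) (hu : Summable (fun j => u j ^ 2))
    (hv : Summable (fun j => v j ^ 2)) :
    (∑' j, u j * v j) ^ 2 ≤ (∑' j, u j ^ 2) * (∑' j, v j ^ 2) := by
  have huv : Summable (fun j => u j * v j) := by
    apply Summable.of_norm_bounded ((hu.add hv).mul_left (1/2 : ℝ))
    intro j
    have : |u j * v j| ≤ (u j ^ 2 + v j ^ 2) / 2 := by
      rw [abs_mul]
      nlinarith [abs_nonneg (u j), abs_nonneg (v j), sq_abs (u j), sq_abs (v j),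
        sq_nonneg (|u j| - |v j|)]
    calc ‖u j * v j‖ = |u j * v j| := Real.norm_eq_abs _
      _ ≤ (u j ^ 2 + v j ^ 2) / 2 := this
      _ = 1/2 * (u j ^ 2 + v j ^ 2) := by ring
  have h1 : ∀ n : ℕ, (∑ j ∈ Finset.range n, u j * v j) ^ 2 ≤
      (∑' j, u j ^ 2) * (∑' j, v j ^ 2) := by
    intro n
    have := Finset.sum_mul_sq_le_sq_mul_sq (Finset.range n) u v
    have h2 : ∑ j ∈ Finset.range n, u j ^ 2 ≤ ∑' j, u j ^ 2 :=
      Summable.sum_le_tsum _ (fun i _ => sq_nonneg _) hu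
    have h3 : ∑ j ∈ Finset.range n, v j ^ 2 ≤ ∑' j, v j ^ 2 :=
      Summable.sum_le_tsum _ (fun i _ => sq_nonneg _) hv
    have h4 : (0:ℝ) ≤ ∑ j ∈ Finset.range n, v j ^ 2 :=
      Finset.sum_nonneg fun i _ => sq_nonneg _
    have h5 : (0:ℝ) ≤ ∑' j, u j ^ 2 := tsum_nonneg fun i => sq_nonneg _
    nlinarith
  have htend : Tendsto (fun n => (∑ j ∈ Finset.range n, u j * v j) ^ 2) atTop
      (nhds ((∑' j, u j * v j) ^ 2)) :=
    (huv.hasSum.tendsto_sum_nat).pow 2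
  exact le_of_tendsto htend (Filter.Eventually.of_forall h1)

private lemma base_merge {lam : ℝ} (hl0 : 0 < lam) (x y : ℝ) (j : ℕ) :
    (lam ^ x) ^ j * (lam ^ y) ^ j = (lam ^ (x+y)) ^ j := by
  rw [← mul_pow, ← Real.rpow_add hl0]

private lemma geom_pos {lam : ℝ} (hl0 : 0 < lam) (x : ℝ) (j : ℕ) :
    (0:ℝ) < (lam ^ x) ^ j := pow_pos (Real.rpow_pos_of_pos hl0 _) j

private lemma sq_term_bound {lam : ℝ} (hl0 : 0 < lam) (x y : ℝ) (C : ℕ → ℝ) (m : ℝ)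
    (hC : ∀ j, |C j| ≤ m * (lam ^ y) ^ j) (j : ℕ) :
    |(lam ^ x) ^ j * (C j)^2| ≤ m^2 * (lam ^ (x + 2*y)) ^ j := by
  have h1 : |C j|^2 ≤ (m * (lam ^ y) ^ j)^2 := pow_le_pow_left₀ (abs_nonneg _) (hC j) 2
  have h2 : (lam ^ x) ^ j * ((lam ^ y) ^ j * (lam ^ y) ^ j) = (lam ^ (x + 2*y)) ^ j := by
    rw [base_merge hl0, base_merge hl0]
    congr 1
    congr 1
    ring
  calc |(lam ^ x) ^ j * (C j)^2| = (lam ^ x) ^ j * |C j|^2 := by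
        rw [abs_mul, abs_of_pos (geom_pos hl0 x j), abs_pow]
    _ ≤ (lam ^ x) ^ j * (m * (lam ^ y) ^ j)^2 :=
        mul_le_mul_of_nonneg_left h1 (geom_pos hl0 x j).le
    _ = m^2 * (lam ^ (x + 2*y)) ^ j := by rw [← h2]; ring

private lemma flux_term_bound {lam : ℝ} (hl0 : 0 < lam) (x y : ℝ) (C D : ℕ → ℝ) (m : ℝ)
    (hm : 0 ≤ m)
    (hC : ∀ j, |C j| ≤ m * (lam ^ y) ^ j) (hD : ∀ j, |D j| ≤ m * (lam ^ y) ^ j) (j : ℕ) :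
    |(lam ^ x) ^ j * (C j * D (j+1))| ≤ (m^2 * lam ^ y) * (lam ^ (x + 2*y)) ^ j := by
  have h2 : (lam ^ x) ^ j * ((lam ^ y) ^ j * (lam ^ y) ^ j) = (lam ^ (x + 2*y)) ^ j := by
    rw [base_merge hl0, base_merge hl0]
    congr 1
    congr 1
    ring
  have hD' : |D (j+1)| ≤ m * lam ^ y * (lam ^ y) ^ j := by
    have := hD (j+1)
    rw [pow_succ] at this
    calc |D (j+1)| ≤ m * ((lam ^ y) ^ j * lam ^ y) := this
      _ = m * lam ^ y * (lam ^ y) ^ j := by ring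
  have hprod : |C j * D (j+1)| ≤ (m * (lam ^ y) ^ j) * (m * lam ^ y * (lam ^ y) ^ j) := by
    rw [abs_mul]
    apply mul_le_mul (hC j) hD' (abs_nonneg _)
    positivity
  calc |(lam ^ x) ^ j * (C j * D (j+1))| = (lam ^ x) ^ j * |C j * D (j+1)| := by
        rw [abs_mul, abs_of_pos (geom_pos hl0 x j)]
    _ ≤ (lam ^ x) ^ j * ((m * (lam ^ y) ^ j) * (m * lam ^ y * (lam ^ y) ^ j)) :=
        mul_le_mul_of_nonneg_left hprod (geom_pos hl0 x j).le
    _ = (m^2 * lam ^ y) * (lam ^ (x + 2*y)) ^ j := by rw [← h2]; ring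

section key
variable {lam θ s γ f0 : ℝ}

set_option maxHeartbeats 1000000 in
private lemma dyadic_key (hlam : 1 < lam) (hθ : 0 < θ) (hγ : 0 < γ)
    (h3γ : 3*γ < θ) (hδ : θ - γ - 2*s < 0) (hf0 : 0 ≤ f0)
    (A B : ℕ → ℝ) (m : ℝ) (hm : 0 ≤ m)
    (hA : ∀ j, |A j| ≤ m * (lam ^ (-s)) ^ j) (hB : ∀ j, |B j| ≤ m * (lam ^ (-s)) ^ j)
    (g : ℕ → ℝ) (hg : ∀ j, g j =
      (if j = 0 then (0:ℝ) else (lam ^ (j-1)) ^ θ * (A (j-1))^2)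
      - (lam ^ j) ^ θ * A j * A (j+1)
      + (if j = 0 then (0:ℝ) else (lam ^ (j-1)) ^ θ * (B (j-1))^2)
      - (lam ^ j) ^ θ * B j * B (j+1)
      + (if j = 0 then f0 else 0)) :
    Summable (fun j => (lam ^ (-γ:ℝ)) ^ j * g j) ∧
    (lam ^ (-γ:ℝ) - lam ^ ((γ-θ)/2)) / (∑' j : ℕ, (lam ^ (-(θ+γ))) ^ j) *
      (∑' j, (lam ^ (-γ:ℝ)) ^ j * A j) ^ 2 ≤ ∑' j, (lam ^ (-γ:ℝ)) ^ j * g j := by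
  have hl0 : (0:ℝ) < lam := lt_trans one_pos hlam
  have hδ' : θ - γ + 2*(-s) < 0 := by linarith
  set w : ℕ → ℝ := fun j => (lam ^ (-γ:ℝ)) ^ j with hw
  set ρ : ℝ := lam ^ ((γ-θ)/2) with hρ
  have hρpos : 0 < ρ := Real.rpow_pos_of_pos hl0 _
  -- pieces
  set pA : ℕ → ℝ := fun j => if j = 0 then (0:ℝ) else w j * ((lam ^ (j-1)) ^ θ * (A (j-1))^2) with hpA
  set pB : ℕ → ℝ := fun j => if j = 0 then (0:ℝ) else w j * ((lam ^ (j-1)) ^ θ * (B (j-1))^2) with hpB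
  set qA : ℕ → ℝ := fun j => (lam ^ (θ - γ)) ^ j * (A j * A (j+1)) with hqA
  set qB : ℕ → ℝ := fun j => (lam ^ (θ - γ)) ^ j * (B j * B (j+1)) with hqB
  set r : ℕ → ℝ := fun j => if j = 0 then f0 else 0 with hr
  have hwθ : ∀ j : ℕ, w j * (lam ^ j) ^ θ = (lam ^ (θ - γ)) ^ j := by
    intro j
    rw [hw, rpow_pow_comm hl0 θ j, base_merge hl0]
    congr 1
    congr 1
    ring
  have hpoint : ∀ j, w j * g j = pA j - qA j + pB j - qB j + r j := by
    intro j
    have e1 := hwθ j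
    rcases Nat.eq_zero_or_pos j with h | h
    · subst h
      have e0 : ((lam:ℝ) ^ (0:ℕ)) ^ θ = 1 := by rw [pow_zero, Real.one_rpow]
      have eqw : w 0 = 1 := by show (lam ^ (-γ:ℝ)) ^ 0 = 1; exact pow_zero _
      have eq1 : qA 0 = A 0 * A 1 := by
        show (lam ^ (θ-γ)) ^ 0 * (A 0 * A 1) = A 0 * A 1
        rw [pow_zero, one_mul]
      have eq2 : qB 0 = B 0 * B 1 := by
        show (lam ^ (θ-γ)) ^ 0 * (B 0 * B 1) = B 0 * B 1
        rw [pow_zero, one_mul]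
      have eq3 : pA 0 = 0 := if_pos rfl
      have eq4 : pB 0 = 0 := if_pos rfl
      have eqr : r 0 = f0 := if_pos rfl
      rw [hg 0, eqw, eq1, eq2, eq3, eq4, eqr, e0,
        if_pos (rfl : (0:ℕ) = 0), if_pos (rfl : (0:ℕ) = 0), if_pos (rfl : (0:ℕ) = 0)]
      ring
    · have h0 : j ≠ 0 := Nat.pos_iff_ne_zero.mp h
      simp only [hg, hpA, hpB, hqA, hqB, hr, if_neg h0]
      rw [← e1]; ring
  -- summability
  have hSAsum : Summable (fun j => (lam ^ (θ - γ)) ^ j * (A j)^2) :=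
    summable_of_bound hlam hδ' (sq_term_bound hl0 (θ-γ) (-s) A m hA)
  have hSBsum : Summable (fun j => (lam ^ (θ - γ)) ^ j * (B j)^2) :=
    summable_of_bound hlam hδ' (sq_term_bound hl0 (θ-γ) (-s) B m hB)
  have hqAsum : Summable qA :=
    summable_of_bound hlam hδ' (flux_term_bound hl0 (θ-γ) (-s) A A m hm hA hA)
  have hqBsum : Summable qB :=
    summable_of_bound hlam hδ' (flux_term_bound hl0 (θ-γ) (-s) B B m hm hB hB)
  have hpshift : ∀ (C : ℕ → ℝ), (∀ j, |C j| ≤ m * (lam ^ (-s:ℝ)) ^ j) →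
      ∀ k : ℕ, w (k+1) * ((lam ^ k) ^ θ * (C k)^2) = lam ^ (-γ:ℝ) * ((lam ^ (θ-γ)) ^ k * (C k)^2) := by
    intro C hC k
    have : w (k+1) = lam ^ (-γ:ℝ) * w k := by
      show (lam ^ (-γ:ℝ)) ^ (k+1) = lam ^ (-γ:ℝ) * (lam ^ (-γ:ℝ)) ^ k
      rw [pow_succ]; ring
    rw [this, mul_assoc, ← mul_assoc (w k), hwθ k]
  have hpAsum : Summable pA := by
    rw [← summable_nat_add_iff 1]
    have : (fun k => pA (k+1)) = fun k => lam ^ (-γ:ℝ) * ((lam ^ (θ-γ)) ^ k * (A k)^2) := by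
      funext k
      simp only [hpA, if_neg (Nat.succ_ne_zero k), Nat.add_sub_cancel]
      exact hpshift A hA k
    rw [this]
    exact hSAsum.mul_left _
  have hpBsum : Summable pB := by
    rw [← summable_nat_add_iff 1]
    have : (fun k => pB (k+1)) = fun k => lam ^ (-γ:ℝ) * ((lam ^ (θ-γ)) ^ k * (B k)^2) := by
      funext k
      simp only [hpB, if_neg (Nat.succ_ne_zero k), Nat.add_sub_cancel]
      exact hpshift B hB k
    rw [this]
    exact hSBsum.mul_left _
  have hrsum : Summable r := by
    apply summable_of_ne_finset_zero (s := {0})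
    intro b hb
    simp only [Finset.mem_singleton] at hb
    simp [hr, hb]
  have hsum : Summable (fun j => w j * g j) := by
    have : (fun j => w j * g j) = fun j => pA j - qA j + pB j - qB j + r j := funext hpoint
    rw [this]
    exact ((((hpAsum.sub hqAsum).add hpBsum).sub hqBsum).add hrsum)
  refine ⟨hsum, ?_⟩
  -- tsum values
  set SA : ℝ := ∑' j, (lam ^ (θ - γ)) ^ j * (A j)^2 with hSA
  set SB : ℝ := ∑' j, (lam ^ (θ - γ)) ^ j * (B j)^2 with hSB
  have hSAnn : 0 ≤ SA := tsum_nonneg fun j => mul_nonneg (geom_pos hl0 _ j).le (sq_nonneg _)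
  have hSBnn : 0 ≤ SB := tsum_nonneg fun j => mul_nonneg (geom_pos hl0 _ j).le (sq_nonneg _)
  have htpA : ∑' j, pA j = lam ^ (-γ:ℝ) * SA := by
    rw [Summable.tsum_eq_zero_add hpAsum]
    have e0 : pA 0 = 0 := if_pos rfl
    have e1 : (fun k => pA (k+1)) = fun k => lam ^ (-γ:ℝ) * ((lam ^ (θ-γ)) ^ k * (A k)^2) := by
      funext k
      simp only [hpA, if_neg (Nat.succ_ne_zero k), Nat.add_sub_cancel]
      exact hpshift A hA k
    rw [e0, e1, tsum_mul_left, zero_add, hSA]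
  have htpB : ∑' j, pB j = lam ^ (-γ:ℝ) * SB := by
    rw [Summable.tsum_eq_zero_add hpBsum]
    have e0 : pB 0 = 0 := if_pos rfl
    have e1 : (fun k => pB (k+1)) = fun k => lam ^ (-γ:ℝ) * ((lam ^ (θ-γ)) ^ k * (B k)^2) := by
      funext k
      simp only [hpB, if_neg (Nat.succ_ne_zero k), Nat.add_sub_cancel]
      exact hpshift B hB k
    rw [e0, e1, tsum_mul_left, zero_add, hSB]
  have htr : ∑' j, r j = f0 := by
    rw [tsum_eq_single 0 (fun b hb => if_neg hb)]
    exact if_pos rfl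
  -- flux bounds
  have hρsq : ρ * ρ = lam ^ (γ - θ) := by
    rw [hρ, ← Real.rpow_add hl0]
    congr 1
    ring
  have fluxbound : ∀ (C : ℕ → ℝ), (∀ j, |C j| ≤ m * (lam ^ (-s:ℝ)) ^ j) →
      Summable (fun j => (lam ^ (θ - γ)) ^ j * (C j)^2) →
      ∑' j, (lam ^ (θ - γ)) ^ j * (C j * C (j+1)) ≤
        ρ * ∑' j, (lam ^ (θ - γ)) ^ j * (C j)^2 := by
    intro C hC hCsum
    set SC := ∑' j, (lam ^ (θ - γ)) ^ j * (C j)^2 with hSC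
    have hshiftsum : Summable (fun j => (lam ^ (θ-γ)) ^ (j+1) * (C (j+1))^2) :=
      (summable_nat_add_iff 1).mpr hCsum
    have hmaj : Summable (fun j => ρ/2 * ((lam ^ (θ-γ)) ^ j * (C j)^2)
        + (2*ρ)⁻¹ * (lam ^ (γ-θ)) * ((lam ^ (θ-γ)) ^ (j+1) * (C (j+1))^2)) :=
      (hCsum.mul_left _).add (hshiftsum.mul_left _)
    have hterm : ∀ j, (lam ^ (θ - γ)) ^ j * (C j * C (j+1)) ≤
        ρ/2 * ((lam ^ (θ-γ)) ^ j * (C j)^2)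
        + (2*ρ)⁻¹ * (lam ^ (γ-θ)) * ((lam ^ (θ-γ)) ^ (j+1) * (C (j+1))^2) := by
      intro j
      have hgp := geom_pos hl0 (θ-γ) j
      have key : C j * C (j+1) ≤ ρ/2 * (C j)^2 + (2*ρ)⁻¹ * (C (j+1))^2 := by
        have h1 : 0 ≤ (ρ * C j - C (j+1))^2 := sq_nonneg _
        have h2 : ρ * (C j * C (j+1)) ≤ ρ*ρ/2 * (C j)^2 + 1/2 * (C (j+1))^2 := by nlinarith
        have := mul_le_mul_of_nonneg_left h2 (le_of_lt (inv_pos.mpr hρpos))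
        rw [← mul_assoc, inv_mul_cancel₀ (ne_of_gt hρpos), one_mul] at this
        calc C j * C (j+1) ≤ ρ⁻¹ * (ρ*ρ/2 * (C j)^2 + 1/2 * (C (j+1))^2) := this
          _ = ρ/2 * (C j)^2 + (2*ρ)⁻¹ * (C (j+1))^2 := by
              field_simp
      have e2 : (lam ^ (θ-γ)) ^ (j+1) = (lam ^ (θ-γ)) ^ j * lam ^ (θ-γ) := pow_succ _ _
      have e3 : lam ^ (γ-θ) * lam ^ (θ-γ) = 1 := by
        rw [← Real.rpow_add hl0]
        norm_num
      calc (lam ^ (θ - γ)) ^ j * (C j * C (j+1))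
          ≤ (lam ^ (θ - γ)) ^ j * (ρ/2 * (C j)^2 + (2*ρ)⁻¹ * (C (j+1))^2) :=
            mul_le_mul_of_nonneg_left key hgp.le
        _ = ρ/2 * ((lam ^ (θ-γ)) ^ j * (C j)^2)
            + (2*ρ)⁻¹ * ((lam ^ (γ-θ) * lam ^ (θ-γ)) * ((lam ^ (θ-γ)) ^ j * (C (j+1))^2)) := by
            rw [e3]; ring
        _ = ρ/2 * ((lam ^ (θ-γ)) ^ j * (C j)^2)
            + (2*ρ)⁻¹ * (lam ^ (γ-θ)) * ((lam ^ (θ-γ)) ^ (j+1) * (C (j+1))^2) := by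
            rw [e2]; ring
    have hqsum' : Summable (fun j => (lam ^ (θ - γ)) ^ j * (C j * C (j+1))) :=
      summable_of_bound hlam hδ' (flux_term_bound hl0 (θ-γ) (-s) C C m hm hC hC)
    have hle := Summable.tsum_le_tsum hterm hqsum' hmaj
    have hshift_le : ∑' j, (lam ^ (θ-γ)) ^ (j+1) * (C (j+1))^2 ≤ SC := by
      have := Summable.tsum_eq_zero_add hCsum
      have h0 : (0:ℝ) ≤ (lam ^ (θ-γ)) ^ 0 * (C 0)^2 :=
        mul_nonneg (geom_pos hl0 _ 0).le (sq_nonneg _)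
      rw [hSC, this]
      linarith
    have htmaj : ∑' j, (ρ/2 * ((lam ^ (θ-γ)) ^ j * (C j)^2)
        + (2*ρ)⁻¹ * (lam ^ (γ-θ)) * ((lam ^ (θ-γ)) ^ (j+1) * (C (j+1))^2))
        = ρ/2 * SC + (2*ρ)⁻¹ * (lam ^ (γ-θ)) * ∑' j, (lam ^ (θ-γ)) ^ (j+1) * (C (j+1))^2 := by
      rw [Summable.tsum_add (hCsum.mul_left _) ((hshiftsum.mul_left _)), tsum_mul_left, tsum_mul_left]
    have hcoef : (2*ρ)⁻¹ * (lam ^ (γ-θ)) = ρ/2 := by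
      rw [← hρsq]
      field_simp
    have hfin : ∑' j, (lam ^ (θ - γ)) ^ j * (C j * C (j+1)) ≤ ρ/2 * SC + ρ/2 * SC := by
      rw [htmaj, hcoef] at hle
      have h2 : (ρ/2) * (∑' j, (lam ^ (θ-γ)) ^ (j+1) * (C (j+1))^2) ≤ ρ/2 * SC :=
        mul_le_mul_of_nonneg_left hshift_le (by positivity)
      linarith
    linarith [hfin]
  have hqAle : ∑' j, qA j ≤ ρ * SA := fluxbound A hA hSAsum
  have hqBle : ∑' j, qB j ≤ ρ * SB := fluxbound B hB hSBsum
  -- total lower bound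
  have htsum_eq : ∑' j, w j * g j =
      (∑' j, pA j) - (∑' j, qA j) + (∑' j, pB j) - (∑' j, qB j) + (∑' j, r j) := by
    have e : (fun j => w j * g j) = fun j => pA j - qA j + pB j - qB j + r j := funext hpoint
    rw [e]
    rw [Summable.tsum_add ((((hpAsum.sub hqAsum).add hpBsum).sub hqBsum)) hrsum]
    rw [Summable.tsum_sub (((hpAsum.sub hqAsum).add hpBsum)) hqBsum]
    rw [Summable.tsum_add ((hpAsum.sub hqAsum)) hpBsum]
    rw [Summable.tsum_sub hpAsum hqAsum]
  have hκpos : 0 < lam ^ (-γ:ℝ) - ρ := by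
    rw [hρ, sub_pos]
    apply Real.rpow_lt_rpow_left_iff hlam |>.mpr
    linarith
  have hGge : (lam ^ (-γ:ℝ) - ρ) * SA ≤ ∑' j, w j * g j := by
    rw [htsum_eq, htpA, htpB, htr]
    nlinarith [hSBnn, hSAnn, hqAle, hqBle, hρpos, hf0]
  -- Cauchy-Schwarz
  set C2 : ℝ := ∑' j : ℕ, (lam ^ (-(θ+γ))) ^ j with hC2
  have hC2sum : Summable (fun j : ℕ => (lam ^ (-(θ+γ))) ^ j) :=
    geom_summable hlam (by linarith)
  have hC2ge1 : 1 ≤ C2 := by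
    have := Summable.le_tsum hC2sum 0 (fun j _ => (geom_pos hl0 _ j).le)
    rw [pow_zero] at this
    exact this
  have hC2pos : 0 < C2 := lt_of_lt_of_le one_pos hC2ge1
  have hFsq : (∑' j, w j * A j)^2 ≤ C2 * SA := by
    have hu : Summable (fun j : ℕ => ((lam ^ (-(θ+γ)/2)) ^ j)^2) := by
      have e : (fun j : ℕ => ((lam ^ (-(θ+γ)/2)) ^ j)^2) = fun j : ℕ => (lam ^ (-(θ+γ))) ^ j := by
        funext j
        rw [sq, base_merge hl0]
        congr 1
        congr 1
        ring
      rw [e]; exact hC2sum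
    have hv : Summable (fun j => ((lam ^ ((θ-γ)/2)) ^ j * A j)^2) := by
      have e : (fun j => ((lam ^ ((θ-γ)/2)) ^ j * A j)^2) = fun j => (lam ^ (θ-γ)) ^ j * (A j)^2 := by
        funext j
        rw [mul_pow, sq ((lam ^ ((θ-γ)/2)) ^ j), base_merge hl0]
        congr 2
        ring
      rw [e]; exact hSAsum
    have huv : (fun j : ℕ => (lam ^ (-(θ+γ)/2)) ^ j * ((lam ^ ((θ-γ)/2)) ^ j * A j)) =
        fun j => w j * A j := by
      funext j
      rw [hw, ← mul_assoc, base_merge hl0]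
      congr 2
      ring
    have := tsum_cs (fun j : ℕ => (lam ^ (-(θ+γ)/2)) ^ j)
      (fun j => (lam ^ ((θ-γ)/2)) ^ j * A j) hu hv
    rw [huv] at this
    calc (∑' j, w j * A j)^2 ≤ (∑' j, ((lam ^ (-(θ+γ)/2)) ^ j)^2) *
          (∑' j, ((lam ^ ((θ-γ)/2)) ^ j * A j)^2) := this
      _ = C2 * SA := by
          congr 1
          · rw [hC2]
            congr 1
            funext j
            rw [sq, base_merge hl0]
            congr 1
            congr 1
            ring
          · rw [hSA]
            congr 1
            funext j
            rw [mul_pow, sq ((lam ^ ((θ-γ)/2)) ^ j), base_merge hl0]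
            congr 2
            ring
  -- conclude
  have : (lam ^ (-γ:ℝ) - ρ) / C2 * (∑' j, w j * A j)^2 ≤ (lam ^ (-γ:ℝ) - ρ) * SA := by
    rw [div_mul_eq_mul_div, div_le_iff₀ hC2pos]
    calc (lam ^ (-γ:ℝ) - ρ) * (∑' j, w j * A j)^2 ≤ (lam ^ (-γ:ℝ) - ρ) * (C2 * SA) :=
        mul_le_mul_of_nonneg_left hFsq hκpos.le
      _ = (lam ^ (-γ:ℝ) - ρ) * SA * C2 := by ring
  exact le_trans this hGge

end key

private lemma lin_term_bound {lam : ℝ} (hl0 : 0 < lam) (x y : ℝ) (C : ℕ → ℝ) (m : ℝ)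
    (hC : ∀ j, |C j| ≤ m * (lam ^ y) ^ j) (j : ℕ) :
    |(lam ^ x) ^ j * C j| ≤ m * (lam ^ (x + y)) ^ j := by
  calc |(lam ^ x) ^ j * C j| = (lam ^ x) ^ j * |C j| := by
        rw [abs_mul, abs_of_pos (geom_pos hl0 x j)]
    _ ≤ (lam ^ x) ^ j * (m * (lam ^ y) ^ j) :=
        mul_le_mul_of_nonneg_left (hC j) (geom_pos hl0 x j).le
    _ = m * (lam ^ (x + y)) ^ j := by rw [← base_merge hl0 x y]; ring

private lemma ite_src_bound {lam θ s γ : ℝ} (hlam : 1 < lam) {m : ℝ}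
    (C : ℕ → ℝ) (hC : ∀ j, |C j| ≤ m * (lam ^ (-s)) ^ j) (j : ℕ) :
    |(lam ^ (-γ:ℝ)) ^ j * (if j = 0 then (0:ℝ) else (lam ^ (j-1)) ^ θ * (C (j-1))^2)|
      ≤ (lam ^ (-γ:ℝ) * (lam ^ (θ-γ+2*(-s)))⁻¹ * m^2) * (lam ^ (θ-γ+2*(-s))) ^ j := by
  have hl0 : (0:ℝ) < lam := lt_trans one_pos hlam
  have hqpos : (0:ℝ) < lam ^ (θ-γ+2*(-s)) := Real.rpow_pos_of_pos hl0 _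
  rcases Nat.eq_zero_or_pos j with h | h
  · subst h
    rw [if_pos rfl, mul_zero, abs_zero]
    have hm2 : 0 ≤ m^2 := sq_nonneg m
    have h1 : (0:ℝ) < lam ^ (-γ:ℝ) := Real.rpow_pos_of_pos hl0 _
    have h2 : (0:ℝ) < (lam ^ (θ-γ+2*(-s)))⁻¹ := inv_pos.mpr hqpos
    have h3 : (0:ℝ) < (lam ^ (θ-γ+2*(-s))) ^ (0:ℕ) := geom_pos hl0 _ 0
    positivity
  · obtain ⟨k, rfl⟩ := Nat.exists_eq_succ_of_ne_zero (Nat.pos_iff_ne_zero.mp h)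
    rw [if_neg (Nat.succ_ne_zero k), Nat.succ_sub_one]
    have e1 : (lam ^ (-γ:ℝ)) ^ (k+1) = lam ^ (-γ:ℝ) * (lam ^ (-γ:ℝ)) ^ k := by
      rw [pow_succ]; ring
    have e2 : ((lam:ℝ) ^ k) ^ θ = (lam ^ θ) ^ k := rpow_pow_comm hl0 θ k
    have e3 : (lam ^ (-γ:ℝ)) ^ k * (lam ^ θ) ^ k = (lam ^ (θ-γ)) ^ k := by
      rw [base_merge hl0]
      congr 1
      congr 1
      ring
    have hb : |(lam ^ (θ-γ)) ^ k * (C k)^2| ≤ m^2 * (lam ^ ((θ-γ) + 2*(-s))) ^ k :=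
      sq_term_bound hl0 (θ-γ) (-s) C m hC k
    have e4 : (lam ^ (θ-γ+2*(-s))) ^ (k+1) = (lam ^ (θ-γ+2*(-s))) ^ k * lam ^ (θ-γ+2*(-s)) :=
      pow_succ _ _
    have e5 : (lam ^ (-γ:ℝ)) ^ (k+1) * ((lam ^ k) ^ θ * (C k)^2)
        = lam ^ (-γ:ℝ) * ((lam ^ (θ-γ)) ^ k * (C k)^2) := by
      rw [e1, e2, ← e3]; ring
    calc |(lam ^ (-γ:ℝ)) ^ (k+1) * ((lam ^ k) ^ θ * (C k)^2)|
        = lam ^ (-γ:ℝ) * |(lam ^ (θ-γ)) ^ k * (C k)^2| := by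
          rw [e5, abs_mul, abs_of_pos (Real.rpow_pos_of_pos hl0 _)]
      _ ≤ lam ^ (-γ:ℝ) * (m^2 * (lam ^ (θ-γ+2*(-s))) ^ k) :=
          mul_le_mul_of_nonneg_left hb (Real.rpow_pos_of_pos hl0 _).le
      _ = (lam ^ (-γ:ℝ) * (lam ^ (θ-γ+2*(-s)))⁻¹ * m^2) * (lam ^ (θ-γ+2*(-s))) ^ (k+1) := by
          rw [e4]
          field_simp

private lemma g_bound {lam θ s γ f0 m : ℝ} (hlam : 1 < lam) (hm : 0 ≤ m) (hf0 : 0 ≤ f0)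
    (A B : ℕ → ℝ) (hA : ∀ j, |A j| ≤ m * (lam ^ (-s)) ^ j)
    (hB : ∀ j, |B j| ≤ m * (lam ^ (-s)) ^ j) (j : ℕ) :
    |(lam ^ (-γ:ℝ)) ^ j * ((if j = 0 then (0:ℝ) else (lam ^ (j-1)) ^ θ * (A (j-1))^2)
      - (lam ^ j) ^ θ * A j * A (j+1)
      + (if j = 0 then (0:ℝ) else (lam ^ (j-1)) ^ θ * (B (j-1))^2)
      - (lam ^ j) ^ θ * B j * B (j+1)
      + (if j = 0 then f0 else 0))| ≤
    (2 * (lam ^ (-γ:ℝ) * (lam ^ (θ-γ+2*(-s)))⁻¹ * m^2) + 2 * (m^2 * lam ^ (-s:ℝ)))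
      * (lam ^ (θ-γ+2*(-s))) ^ j + f0 * (lam ^ (-γ:ℝ)) ^ j := by
  have hl0 : (0:ℝ) < lam := lt_trans one_pos hlam
  set w : ℝ := (lam ^ (-γ:ℝ)) ^ j with hwdef
  have hwpos : 0 < w := geom_pos hl0 _ j
  set t1 : ℝ := (if j = 0 then (0:ℝ) else (lam ^ (j-1)) ^ θ * (A (j-1))^2) with ht1
  set t3 : ℝ := (if j = 0 then (0:ℝ) else (lam ^ (j-1)) ^ θ * (B (j-1))^2) with ht3
  set t5 : ℝ := (if j = 0 then f0 else 0) with ht5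
  have hsplit : w * (t1 - (lam ^ j) ^ θ * A j * A (j+1) + t3 - (lam ^ j) ^ θ * B j * B (j+1) + t5)
      = (w * t1) - (w * ((lam ^ j) ^ θ * A j * A (j+1))) + (w * t3)
        - (w * ((lam ^ j) ^ θ * B j * B (j+1))) + (w * t5) := by ring
  have habs : |w * (t1 - (lam ^ j) ^ θ * A j * A (j+1) + t3 - (lam ^ j) ^ θ * B j * B (j+1) + t5)|
      ≤ |w * t1| + |w * ((lam ^ j) ^ θ * A j * A (j+1))| + |w * t3|
        + |w * ((lam ^ j) ^ θ * B j * B (j+1))| + |w * t5| := by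
    rw [hsplit]
    calc |w * t1 - w * ((lam ^ j) ^ θ * A j * A (j+1)) + w * t3
          - w * ((lam ^ j) ^ θ * B j * B (j+1)) + w * t5|
        ≤ |w * t1 - w * ((lam ^ j) ^ θ * A j * A (j+1)) + w * t3
          - w * ((lam ^ j) ^ θ * B j * B (j+1))| + |w * t5| := abs_add_le _ _
      _ ≤ (|w * t1 - w * ((lam ^ j) ^ θ * A j * A (j+1)) + w * t3|
          + |w * ((lam ^ j) ^ θ * B j * B (j+1))|) + |w * t5| := by
          gcongr
          exact abs_sub _ _
      _ ≤ ((|w * t1 - w * ((lam ^ j) ^ θ * A j * A (j+1))| + |w * t3|)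
          + |w * ((lam ^ j) ^ θ * B j * B (j+1))|) + |w * t5| := by
          gcongr
          exact abs_add_le _ _
      _ ≤ (((|w * t1| + |w * ((lam ^ j) ^ θ * A j * A (j+1))|) + |w * t3|)
          + |w * ((lam ^ j) ^ θ * B j * B (j+1))|) + |w * t5| := by
          gcongr
          exact abs_sub _ _
      _ = |w * t1| + |w * ((lam ^ j) ^ θ * A j * A (j+1))| + |w * t3|
          + |w * ((lam ^ j) ^ θ * B j * B (j+1))| + |w * t5| := by ring
  have hfluxrw : ∀ C : ℕ → ℝ, w * ((lam ^ j) ^ θ * C j * C (j+1))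
      = (lam ^ (θ-γ)) ^ j * (C j * C (j+1)) := by
    intro C
    rw [hwdef, rpow_pow_comm hl0 θ j]
    rw [show (lam ^ (-γ:ℝ)) ^ j * ((lam ^ θ) ^ j * C j * C (j+1))
      = ((lam ^ (-γ:ℝ)) ^ j * (lam ^ θ) ^ j) * (C j * C (j+1)) from by ring, base_merge hl0]
    congr 2
    ring
  have hfa : |w * ((lam ^ j) ^ θ * A j * A (j+1))| ≤ (m^2 * lam ^ (-s:ℝ)) * (lam ^ (θ-γ+2*(-s))) ^ j := by
    rw [hfluxrw A]
    exact flux_term_bound hl0 (θ-γ) (-s) A A m hm hA hA j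
  have hfb : |w * ((lam ^ j) ^ θ * B j * B (j+1))| ≤ (m^2 * lam ^ (-s:ℝ)) * (lam ^ (θ-γ+2*(-s))) ^ j := by
    rw [hfluxrw B]
    exact flux_term_bound hl0 (θ-γ) (-s) B B m hm hB hB j
  have hsa : |w * t1| ≤ (lam ^ (-γ:ℝ) * (lam ^ (θ-γ+2*(-s)))⁻¹ * m^2) * (lam ^ (θ-γ+2*(-s))) ^ j :=
    ite_src_bound hlam A hA j
  have hsb : |w * t3| ≤ (lam ^ (-γ:ℝ) * (lam ^ (θ-γ+2*(-s)))⁻¹ * m^2) * (lam ^ (θ-γ+2*(-s))) ^ j :=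
    ite_src_bound hlam B hB j
  have hf5 : |w * t5| ≤ f0 * w := by
    rcases Nat.eq_zero_or_pos j with h | h
    · subst h
      rw [ht5, if_pos rfl, abs_mul, abs_of_pos hwpos, abs_of_nonneg hf0, mul_comm]
    · rw [ht5, if_neg (Nat.pos_iff_ne_zero.mp h), mul_zero, abs_zero]
      positivity
  calc |w * (t1 - (lam ^ j) ^ θ * A j * A (j+1) + t3 - (lam ^ j) ^ θ * B j * B (j+1) + t5)|
      ≤ |w * t1| + |w * ((lam ^ j) ^ θ * A j * A (j+1))| + |w * t3|
        + |w * ((lam ^ j) ^ θ * B j * B (j+1))| + |w * t5| := habs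
    _ ≤ (lam ^ (-γ:ℝ) * (lam ^ (θ-γ+2*(-s)))⁻¹ * m^2) * (lam ^ (θ-γ+2*(-s))) ^ j
        + (m^2 * lam ^ (-s:ℝ)) * (lam ^ (θ-γ+2*(-s))) ^ j
        + (lam ^ (-γ:ℝ) * (lam ^ (θ-γ+2*(-s)))⁻¹ * m^2) * (lam ^ (θ-γ+2*(-s))) ^ j
        + (m^2 * lam ^ (-s:ℝ)) * (lam ^ (θ-γ+2*(-s))) ^ j + f0 * w := by
        gcongr
    _ = (2 * (lam ^ (-γ:ℝ) * (lam ^ (θ-γ+2*(-s)))⁻¹ * m^2) + 2 * (m^2 * lam ^ (-s:ℝ)))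
        * (lam ^ (θ-γ+2*(-s))) ^ j + f0 * w := by ring

/-- The (possibly infinite) squared `H^s` norm of a sequence, with `λ_j = lam ^ j`:
`‖a‖_{H^s}² = Σ_j λ_j^{2s} a_j²`. -/
noncomputable def Hsq (lam s : ℝ) (a : ℕ → ℝ) : ℝ≥0∞ :=
  ∑' j : ℕ, ENNReal.ofReal ((lam ^ j) ^ (2 * s) * (a j) ^ 2)

/-- A solution of the inviscid dyadic MHD model on `[0,∞)`:
`a_j' = λ_{j-1}^θ a_{j-1}² − λ_j^θ a_j a_{j+1} + λ_{j-1}^θ b_{j-1}² − λ_j^θ b_j b_{j+1} + f_j`,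
`b_j' = λ_j^θ a_j b_{j+1} − λ_j^θ b_j a_{j+1}`, with `λ_j = lam ^ j`,
`a_{-1} ≡ b_{-1} ≡ 0`, `f_0 = f0 ≥ 0` and `f_j = 0` for `j ≥ 1`. -/
def IsMHDInviscidSol (lam θ f0 : ℝ) (a b : ℕ → ℝ → ℝ) : Prop :=
  ∀ j : ℕ, ∀ t ∈ Set.Ici (0 : ℝ),
    HasDerivWithinAt (a j)
      ((if j = 0 then (0 : ℝ) else (lam ^ (j - 1)) ^ θ * (a (j - 1) t) ^ 2)
        - (lam ^ j) ^ θ * a j t * a (j + 1) t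
        + (if j = 0 then (0 : ℝ) else (lam ^ (j - 1)) ^ θ * (b (j - 1) t) ^ 2)
        - (lam ^ j) ^ θ * b j t * b (j + 1) t
        + (if j = 0 then f0 else 0)) (Set.Ici 0) t ∧
    HasDerivWithinAt (b j)
      ((lam ^ j) ^ θ * a j t * b (j + 1) t
        - (lam ^ j) ^ θ * b j t * a (j + 1) t) (Set.Ici 0) t

set_option maxHeartbeats 2000000 in
/-- Dai–Friedlander: a solution of the inviscid dyadic MHD model with componentwise
positive initial data blows up in finite time in `H^s` for every `s > θ/3`. -/
theorem mhd_inviscid_blowup (lam θ f0 : ℝ) (hlam : 1 < lam) (hθ : 0 < θ)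
    (hf0 : 0 ≤ f0) (a b : ℕ → ℝ → ℝ) (hsol : IsMHDInviscidSol lam θ f0 a b)
    (hpos : ∀ j : ℕ, 0 < a j 0 ∧ 0 < b j 0) :
    ∀ s : ℝ, θ / 3 < s → ∃ T : ℝ, 0 < T ∧
      (⨆ t ∈ Set.Ico (0 : ℝ) T,
        (Hsq lam s (fun j => a j t) + Hsq lam s (fun j => b j t))) = ⊤ := by
  intro s hs
  by_contra hcon
  push_neg at hcon
  have hl0 : (0:ℝ) < lam := lt_trans one_pos hlam
  have hspos : 0 < s := lt_trans (by linarith) hs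
  set γ : ℝ := (max (θ - 2*s) 0 + θ/3)/2 with hγdef
  have hmax0 : (0:ℝ) ≤ max (θ - 2*s) 0 := le_max_right _ _
  have hmax1 : θ - 2*s ≤ max (θ - 2*s) 0 := le_max_left _ _
  have hmaxlt : max (θ - 2*s) 0 < θ/3 := max_lt (by linarith) (by linarith)
  have hγpos : 0 < γ := by rw [hγdef]; linarith
  have h3γ : 3*γ < θ := by rw [hγdef]; linarith
  have hδ : θ - γ - 2*s < 0 := by rw [hγdef]; linarith
  have hδ' : θ - γ + 2*(-s) < 0 := by linarith
  have hγs : -γ + -s < 0 := by linarith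
  -- the RHS of the a-equations
  set g : ℕ → ℝ → ℝ := fun j t =>
    (if j = 0 then (0 : ℝ) else (lam ^ (j - 1)) ^ θ * (a (j - 1) t) ^ 2)
      - (lam ^ j) ^ θ * a j t * a (j + 1) t
      + (if j = 0 then (0 : ℝ) else (lam ^ (j - 1)) ^ θ * (b (j - 1) t) ^ 2)
      - (lam ^ j) ^ θ * b j t * b (j + 1) t
      + (if j = 0 then f0 else 0) with hgdef
  have hderiva : ∀ j, ∀ t ∈ Set.Ici (0:ℝ), HasDerivWithinAt (a j) (g j t) (Set.Ici 0) t :=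
    fun j t ht => (hsol j t ht).1
  have hconta : ∀ j, ContinuousOn (a j) (Set.Ici 0) :=
    fun j t ht => ((hsol j t ht).1.continuousWithinAt)
  have hcontb : ∀ j, ContinuousOn (b j) (Set.Ici 0) :=
    fun j t ht => ((hsol j t ht).2.continuousWithinAt)
  have hcontg : ∀ j, ContinuousOn (g j) (Set.Ici 0) := by
    intro j
    rw [hgdef]
    apply ContinuousOn.add
    apply ContinuousOn.sub
    apply ContinuousOn.add
    apply ContinuousOn.sub
    · split_ifs
      · exact continuousOn_const
      · exact continuousOn_const.mul ((hconta _).pow 2)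
    · exact (continuousOn_const.mul (hconta _)).mul (hconta _)
    · split_ifs
      · exact continuousOn_const
      · exact continuousOn_const.mul ((hcontb _).pow 2)
    · exact (continuousOn_const.mul (hcontb _)).mul (hcontb _)
    · exact continuousOn_const
  -- componentwise bounds from the no-blowup assumption
  have hbound : ∀ T : ℝ, 0 < T → ∃ m : ℝ, 0 ≤ m ∧ ∀ t ∈ Set.Ico (0:ℝ) T, ∀ j : ℕ,
      |a j t| ≤ m * (lam ^ (-s:ℝ)) ^ j ∧ |b j t| ≤ m * (lam ^ (-s:ℝ)) ^ j := by
    intro T hT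
    have hne := hcon T hT
    set Msup := ⨆ t ∈ Set.Ico (0:ℝ) T,
      (Hsq lam s (fun j => a j t) + Hsq lam s (fun j => b j t)) with hMsup
    refine ⟨Real.sqrt Msup.toReal, Real.sqrt_nonneg _, ?_⟩
    intro t ht j
    have hle : Hsq lam s (fun j => a j t) + Hsq lam s (fun j => b j t) ≤ Msup :=
      le_biSup (fun t => Hsq lam s (fun j => a j t) + Hsq lam s (fun j => b j t)) ht
    have key : ∀ (cseq : ℕ → ℝ), Hsq lam s cseq ≤ Msup →
        |cseq j| ≤ Real.sqrt Msup.toReal * (lam ^ (-s:ℝ)) ^ j := by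
      intro cseq hc
      have h2 : ENNReal.ofReal ((lam ^ j) ^ (2*s) * (cseq j)^2) ≤ Msup :=
        le_trans (ENNReal.le_tsum j) hc
      have h3 : (lam ^ j) ^ (2*s) * (cseq j)^2 ≤ Msup.toReal :=
        (ENNReal.ofReal_le_iff_le_toReal hne).mp h2
      have e1 : ((lam:ℝ) ^ j) ^ (2*s) = ((lam ^ (s:ℝ)) ^ j)^2 := by
        rw [rpow_pow_comm hl0 (2*s) j, sq, base_merge hl0]
        congr 1
        congr 1
        ring
      have h4 : (|cseq j| * (lam ^ (s:ℝ)) ^ j)^2 ≤ Msup.toReal := by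
        rw [mul_pow, sq_abs]
        calc (cseq j)^2 * ((lam ^ (s:ℝ)) ^ j)^2 = (lam ^ j) ^ (2*s) * (cseq j)^2 := by
              rw [e1]; ring
          _ ≤ Msup.toReal := h3
      have h5 : |cseq j| * (lam ^ (s:ℝ)) ^ j ≤ Real.sqrt Msup.toReal := by
        have h6 := Real.sqrt_le_sqrt h4
        rwa [Real.sqrt_sq (by positivity)] at h6
      have e2 : (lam ^ (s:ℝ)) ^ j * (lam ^ (-s:ℝ)) ^ j = 1 := by
        rw [base_merge hl0, show s + -s = (0:ℝ) by ring, Real.rpow_zero, one_pow]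
      calc |cseq j| = (|cseq j| * (lam ^ (s:ℝ)) ^ j) * (lam ^ (-s:ℝ)) ^ j := by
            rw [mul_assoc, e2, mul_one]
        _ ≤ Real.sqrt Msup.toReal * (lam ^ (-s:ℝ)) ^ j :=
            mul_le_mul_of_nonneg_right h5 (geom_pos hl0 _ _).le
    exact ⟨key _ (le_trans le_self_add hle), key _ (le_trans le_add_self hle)⟩
  -- FTC for each component
  have hftc : ∀ j : ℕ, ∀ t : ℝ, 0 ≤ t →
      ∫ u in (0:ℝ)..t, g j u = a j t - a j 0 := by
    intro j t h0
    apply intervalIntegral.integral_eq_sub_of_hasDeriv_right_of_le h0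
    · exact (hconta j).mono (fun x hx => hx.1)
    · intro x hx
      exact (((hderiva j x (le_of_lt hx.1)).hasDerivAt (Ici_mem_nhds hx.1)).hasDerivWithinAt)
    · apply ContinuousOn.intervalIntegrable
      apply (hcontg j).mono
      rw [Set.uIcc_of_le h0]
      exact fun x hx => hx.1
  -- initial value of the Lyapunov functional
  obtain ⟨m₁, hm₁, hb₁⟩ := hbound 1 one_pos
  have h00 : (0:ℝ) ∈ Set.Ico (0:ℝ) 1 := ⟨le_refl _, one_pos⟩
  have hsum0 : Summable (fun j => (lam ^ (-γ:ℝ)) ^ j * a j 0) :=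
    summable_of_bound hlam hγs
      (fun j => lin_term_bound hl0 (-γ) (-s) (fun j => a j 0) m₁ (fun j => (hb₁ 0 h00 j).1) j)
  set F0 : ℝ := ∑' j, (lam ^ (-γ:ℝ)) ^ j * a j 0 with hF0def
  have hF0pos : 0 < F0 := by
    have hterm0 : (lam ^ (-γ:ℝ)) ^ 0 * a 0 0 ≤ F0 :=
      Summable.le_tsum hsum0 0 (fun j _ => mul_nonneg (geom_pos hl0 _ j).le (hpos j).1.le)
    have h01 : 0 < (lam ^ (-γ:ℝ)) ^ 0 * a 0 0 := by
      rw [pow_zero, one_mul]; exact (hpos 0).1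
    linarith
  set ρ : ℝ := lam ^ ((γ-θ)/2) with hρdef
  have hκpos : 0 < lam ^ (-γ:ℝ) - ρ := by
    rw [hρdef, sub_pos]
    exact (Real.rpow_lt_rpow_left_iff hlam).mpr (by linarith)
  set C2 : ℝ := ∑' j : ℕ, (lam ^ (-(θ+γ))) ^ j with hC2def
  have hC2sum : Summable (fun j : ℕ => (lam ^ (-(θ+γ))) ^ j) := geom_summable hlam (by linarith)
  have hC2pos : 0 < C2 := by
    have h1 : (lam ^ (-(θ+γ))) ^ 0 ≤ C2 := Summable.le_tsum hC2sum 0 (fun j _ => (geom_pos hl0 _ j).le)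
    rw [pow_zero] at h1
    linarith
  set c : ℝ := (lam ^ (-γ:ℝ) - ρ) / C2 with hcdef
  have hcpos : 0 < c := div_pos hκpos hC2pos
  set T1 : ℝ := 1/(c*F0) with hT1def
  have hT1pos : 0 < T1 := by rw [hT1def]; positivity
  set T : ℝ := T1 + 1 with hTdef
  have hTpos : 0 < T := by rw [hTdef]; linarith
  obtain ⟨m, hm, hb⟩ := hbound T hTpos
  have hsubIcc : ∀ t : ℝ, t ∈ Set.Icc (0:ℝ) T1 → t ∈ Set.Ico (0:ℝ) T :=
    fun t ht => ⟨ht.1, by rw [hTdef]; linarith [ht.2]⟩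
  -- F and its summability
  set F : ℝ → ℝ := fun t => ∑' j, (lam ^ (-γ:ℝ)) ^ j * a j t with hFdef
  have hFsum : ∀ t ∈ Set.Ico (0:ℝ) T, Summable (fun j => (lam ^ (-γ:ℝ)) ^ j * a j t) :=
    fun t ht => summable_of_bound hlam hγs
      (fun j => lin_term_bound hl0 (-γ) (-s) (fun j => a j t) m (fun j => (hb t ht j).1) j)
  -- per-time key inequality
  have hkey : ∀ u ∈ Set.Ico (0:ℝ) T,
      Summable (fun j => (lam ^ (-γ:ℝ)) ^ j * g j u) ∧
        c * (F u)^2 ≤ ∑' j, (lam ^ (-γ:ℝ)) ^ j * g j u := by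
    intro u hu
    have h := dyadic_key hlam hθ hγpos h3γ hδ hf0 (fun j => a j u) (fun j => b j u) m hm
      (fun j => (hb u hu j).1) (fun j => (hb u hu j).2) (fun j => g j u) (fun j => rfl)
    exact ⟨h.1, h.2⟩
  -- uniform summable bound for the weighted RHS
  set D : ℕ → ℝ := fun j =>
    (2 * (lam ^ (-γ:ℝ) * (lam ^ (θ-γ+2*(-s)))⁻¹ * m^2) + 2 * (m^2 * lam ^ (-s:ℝ)))
      * (lam ^ (θ-γ+2*(-s))) ^ j + f0 * (lam ^ (-γ:ℝ)) ^ j with hDdef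
  have hDsum : Summable D :=
    ((geom_summable hlam hδ').mul_left _).add ((geom_summable hlam (by linarith : -γ < 0)).mul_left f0)
  have hDnonneg : ∀ j, 0 ≤ D j := by
    intro j
    rw [hDdef]
    have h1 : (0:ℝ) < lam ^ (-γ:ℝ) := Real.rpow_pos_of_pos hl0 _
    have h2 : (0:ℝ) < lam ^ (θ-γ+2*(-s)) := Real.rpow_pos_of_pos hl0 _
    have h3 : (0:ℝ) < lam ^ (-s:ℝ) := Real.rpow_pos_of_pos hl0 _
    have h4 := geom_pos hl0 (θ-γ+2*(-s)) j
    have h5 := geom_pos hl0 (-γ) j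
    have h6 : (0:ℝ) ≤ m^2 := sq_nonneg m
    positivity
  have hgb : ∀ u ∈ Set.Ico (0:ℝ) T, ∀ j, |(lam ^ (-γ:ℝ)) ^ j * g j u| ≤ D j :=
    fun u hu j => g_bound hlam hm hf0 (fun j => a j u) (fun j => b j u)
      (fun j => (hb u hu j).1) (fun j => (hb u hu j).2) j
  -- representation of F via the integral of the weighted RHS
  set G : ℝ → ℝ := fun u => ∑' j, (lam ^ (-γ:ℝ)) ^ j * g j u with hGdef
  have hIocsub : ∀ t : ℝ, t ∈ Set.Icc (0:ℝ) T1 → Set.Ioc (0:ℝ) t ⊆ Set.Ico (0:ℝ) T := by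
    intro t ht u hu
    exact ⟨hu.1.le, lt_of_le_of_lt (le_trans hu.2 ht.2) (by rw [hTdef]; linarith)⟩
  have hrep : ∀ t ∈ Set.Icc (0:ℝ) T1, F t - F 0 = ∫ u in Set.Ioc (0:ℝ) t, G u := by
    intro t ht
    have h0t : (0:ℝ) ≤ t := ht.1
    have htT : t ∈ Set.Ico (0:ℝ) T := hsubIcc t ht
    have hterm : ∀ j, (lam ^ (-γ:ℝ)) ^ j * a j t - (lam ^ (-γ:ℝ)) ^ j * a j 0
        = ∫ u in Set.Ioc (0:ℝ) t, (lam ^ (-γ:ℝ)) ^ j * g j u := by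
      intro j
      rw [← intervalIntegral.integral_of_le h0t, intervalIntegral.integral_const_mul,
        hftc j t h0t]
      ring
    have hsub : F t - F 0 = ∑' j, ((lam ^ (-γ:ℝ)) ^ j * a j t - (lam ^ (-γ:ℝ)) ^ j * a j 0) :=
      (Summable.tsum_sub (hFsum t htT) (hFsum 0 ⟨le_refl _, hTpos⟩)).symm
    rw [hsub, funext hterm]
    have hmeas : ∀ j, AEStronglyMeasurable (fun u => (lam ^ (-γ:ℝ)) ^ j * g j u)
        (volume.restrict (Set.Ioc (0:ℝ) t)) := by
      intro j
      exact (continuousOn_const.mul ((hcontg j).mono (fun u hu => hu.1.le))).aestronglyMeasurable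
        measurableSet_Ioc
    have hlint : ∑' j, ∫⁻ u in Set.Ioc (0:ℝ) t, ‖(lam ^ (-γ:ℝ)) ^ j * g j u‖₊ ≠ ⊤ := by
      have hb1 : ∀ j, (∫⁻ u in Set.Ioc (0:ℝ) t, ‖(lam ^ (-γ:ℝ)) ^ j * g j u‖₊)
          ≤ ENNReal.ofReal (D j) * ENNReal.ofReal t := by
        intro j
        have hptw : ∀ u ∈ Set.Ioc (0:ℝ) t,
            (‖(lam ^ (-γ:ℝ)) ^ j * g j u‖₊ : ℝ≥0∞) ≤ ENNReal.ofReal (D j) := by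
          intro u hu
          rw [← enorm_eq_nnnorm, ← ofReal_norm]
          apply ENNReal.ofReal_le_ofReal
          rw [Real.norm_eq_abs]
          exact hgb u (hIocsub t ht hu) j
        calc (∫⁻ u in Set.Ioc (0:ℝ) t, ‖(lam ^ (-γ:ℝ)) ^ j * g j u‖₊)
            ≤ ∫⁻ _ in Set.Ioc (0:ℝ) t, ENNReal.ofReal (D j) :=
              setLIntegral_mono' measurableSet_Ioc hptw
          _ = ENNReal.ofReal (D j) * volume (Set.Ioc (0:ℝ) t) := setLIntegral_const _ _
          _ = ENNReal.ofReal (D j) * ENNReal.ofReal t := by rw [Real.volume_Ioc, sub_zero]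
      have hsum2 : (∑' j, ENNReal.ofReal (D j) * ENNReal.ofReal t) ≠ ⊤ := by
        rw [ENNReal.tsum_mul_right, ← ENNReal.ofReal_tsum_of_nonneg hDnonneg hDsum]
        exact ENNReal.mul_ne_top ENNReal.ofReal_ne_top ENNReal.ofReal_ne_top
      exact ne_top_of_le_ne_top hsum2 (ENNReal.tsum_le_tsum hb1)
    exact (MeasureTheory.integral_tsum hmeas hlint).symm
  -- continuity of F on [0,T1]
  have hFcont : ContinuousOn F (Set.Icc (0:ℝ) T1) := by
    have hUnif := tendstoUniformlyOn_tsum (f := fun (j:ℕ) (x:ℝ) => (lam ^ (-γ:ℝ)) ^ j * a j x)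
      ((geom_summable hlam hγs).mul_left m) (s := Set.Icc (0:ℝ) T1) ?_
    · apply hUnif.continuousOn
      refine Filter.Eventually.frequently (Filter.Eventually.of_forall ?_)
      intro nset
      apply continuousOn_finset_sum
      intro j _
      exact continuousOn_const.mul ((hconta j).mono (fun x hx => hx.1))
    · intro j x hx
      rw [Real.norm_eq_abs]
      exact lin_term_bound hl0 (-γ) (-s) (fun j => a j x) m
        (fun j => (hb x (hsubIcc x hx) j).1) j
  -- integrability of G
  have hDbar : ∀ u ∈ Set.Ico (0:ℝ) T, |G u| ≤ ∑' j, D j := by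
    intro u hu
    have h1 : Summable (fun j => |(lam ^ (-γ:ℝ)) ^ j * g j u|) := by
      apply Summable.of_norm_bounded hDsum
      intro j
      rw [Real.norm_eq_abs, abs_abs]
      exact hgb u hu j
    have h1' : Summable (fun j => ‖(lam ^ (-γ:ℝ)) ^ j * g j u‖) := by
      simpa only [Real.norm_eq_abs] using h1
    have h2 : |G u| ≤ ∑' j, |(lam ^ (-γ:ℝ)) ^ j * g j u| := by
      rw [hGdef]
      simpa only [Real.norm_eq_abs] using norm_tsum_le_tsum_norm h1'
    exact h2.trans (Summable.tsum_le_tsum (fun j => hgb u hu j) h1 hDsum)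
  have hGmeas : ∀ t ∈ Set.Icc (0:ℝ) T1,
      AEStronglyMeasurable G (volume.restrict (Set.Ioc (0:ℝ) t)) := by
    intro t ht
    apply aestronglyMeasurable_of_tendsto_ae (f := fun (n:ℕ) =>
      fun u => ∑ j ∈ Finset.range n, (lam ^ (-γ:ℝ)) ^ j * g j u) atTop
    · intro n
      exact (continuousOn_finset_sum _ (fun j _ =>
        continuousOn_const.mul ((hcontg j).mono (fun u hu => hu.1.le)))).aestronglyMeasurable
        measurableSet_Ioc
    · rw [MeasureTheory.ae_restrict_iff' measurableSet_Ioc]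
      apply Filter.Eventually.of_forall
      intro u hu
      exact (hkey u (hIocsub t ht hu)).1.hasSum.tendsto_sum_nat
  have hGint : ∀ t ∈ Set.Icc (0:ℝ) T1, IntegrableOn G (Set.Ioc (0:ℝ) t) := by
    intro t ht
    apply Integrable.mono' (g := fun _ => ∑' j, D j) ?_ (hGmeas t ht) ?_
    · exact integrableOn_const (by rw [Real.volume_Ioc]; exact ENNReal.ofReal_ne_top) (hC := enorm_ne_top)
    · rw [MeasureTheory.ae_restrict_iff' measurableSet_Ioc]
      apply Filter.Eventually.of_forall
      intro u hu
      rw [Real.norm_eq_abs]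
      exact hDbar u (hIocsub t ht hu)
  -- F² integrable on pieces
  have hF2cont : ContinuousOn (fun u => (F u)^2) (Set.Icc (0:ℝ) T1) := hFcont.pow 2
  have hF2int : ∀ t ∈ Set.Icc (0:ℝ) T1, IntegrableOn (fun u => (F u)^2) (Set.Ioc (0:ℝ) t) := by
    intro t ht
    apply IntegrableOn.mono_set ?_ Set.Ioc_subset_Icc_self
    exact (hF2cont.mono (Set.Icc_subset_Icc (le_refl _) ht.2)).integrableOn_Icc
  set I : ℝ → ℝ := fun t => ∫ u in (0:ℝ)..t, (F u)^2 with hIdef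
  set J : ℝ → ℝ := fun t => F 0 + c * I t with hJdef
  have hIeq : ∀ t ∈ Set.Icc (0:ℝ) T1, I t = ∫ u in Set.Ioc (0:ℝ) t, (F u)^2 :=
    fun t ht => intervalIntegral.integral_of_le ht.1
  have hJleF : ∀ t ∈ Set.Icc (0:ℝ) T1, J t ≤ F t := by
    intro t ht
    have h1 : ∫ u in Set.Ioc (0:ℝ) t, c * (F u)^2 ≤ ∫ u in Set.Ioc (0:ℝ) t, G u := by
      apply setIntegral_mono_on ((hF2int t ht).const_mul c) (hGint t ht) measurableSet_Ioc
      intro u hu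
      exact (hkey u (hIocsub t ht hu)).2
    have h2 : F t = F 0 + ∫ u in Set.Ioc (0:ℝ) t, G u := by linarith [hrep t ht]
    have h3 : ∫ u in Set.Ioc (0:ℝ) t, c * (F u)^2 = c * I t := by
      rw [MeasureTheory.integral_const_mul, hIeq t ht]
    rw [hJdef]
    simp only []
    linarith [h1, h2, h3]
  have hInonneg : ∀ t ∈ Set.Icc (0:ℝ) T1, 0 ≤ I t :=
    fun t ht => intervalIntegral.integral_nonneg ht.1 (fun u _ => sq_nonneg _)
  have hF00 : F 0 = F0 := rfl
  have hJpos : ∀ t ∈ Set.Icc (0:ℝ) T1, 0 < J t := by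
    intro t ht
    have h1 := hInonneg t ht
    have : J t = F 0 + c * I t := rfl
    rw [this, hF00]
    nlinarith [hcpos, hF0pos]
  have hJderiv : ∀ t ∈ Set.Ioo (0:ℝ) T1, HasDerivAt J (c * (F t)^2) t := by
    intro t ht
    have hIderiv : HasDerivAt I ((F t)^2) t := by
      apply intervalIntegral.integral_hasDerivAt_right
      · apply ContinuousOn.intervalIntegrable
        apply hF2cont.mono
        rw [Set.uIcc_of_le ht.1.le]
        exact Set.Icc_subset_Icc (le_refl _) ht.2.le
      · exact (hF2cont.mono Set.Ioo_subset_Icc_self).stronglyMeasurableAtFilter isOpen_Ioo t ht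
      · exact (hF2cont.mono Set.Ioo_subset_Icc_self).continuousAt (Ioo_mem_nhds ht.1 ht.2)
    exact (hIderiv.const_mul c).const_add (F 0)
  set K : ℝ → ℝ := fun t => (J t)⁻¹ + c * t with hKdef
  have hIcont : ContinuousOn I (Set.Icc (0:ℝ) T1) := by
    have h1 : ContinuousOn (fun x => ∫ u in Set.Ioc (0:ℝ) x, (F u)^2) (Set.Icc (0:ℝ) T1) :=
      intervalIntegral.continuousOn_primitive (hF2cont.integrableOn_Icc)
    exact h1.congr (fun x hx => hIeq x hx)
  have hJcont : ContinuousOn J (Set.Icc (0:ℝ) T1) :=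
    continuousOn_const.add (continuousOn_const.mul hIcont)
  have hKcont : ContinuousOn K (Set.Icc (0:ℝ) T1) :=
    (hJcont.inv₀ (fun t ht => ne_of_gt (hJpos t ht))).add
      ((continuous_const.mul continuous_id).continuousOn)
  have hKderiv : ∀ t ∈ Set.Ioo (0:ℝ) T1,
      HasDerivAt K (-(c * (F t)^2) / (J t)^2 + c) t := by
    intro t ht
    have h1 := (hJderiv t ht).inv (ne_of_gt (hJpos t ⟨ht.1.le, ht.2.le⟩))
    have h2 : HasDerivAt (fun u : ℝ => c * u) c t := by
      simpa using (hasDerivAt_id t).const_mul c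
    exact h1.add h2
  have hKanti : AntitoneOn K (Set.Icc (0:ℝ) T1) := by
    apply antitoneOn_of_deriv_nonpos (convex_Icc _ _) hKcont
    · intro x hx
      rw [interior_Icc] at hx
      exact (hKderiv x hx).differentiableAt.differentiableWithinAt
    · intro x hx
      rw [interior_Icc] at hx
      rw [(hKderiv x hx).deriv]
      have hxI : x ∈ Set.Icc (0:ℝ) T1 := ⟨hx.1.le, hx.2.le⟩
      have hJx := hJpos x hxI
      have hJF := hJleF x hxI
      have h5 : (J x)^2 ≤ (F x)^2 := by nlinarith
      have h6 : c ≤ (c * (F x)^2) / (J x)^2 := by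
        rw [le_div_iff₀ (by positivity)]
        nlinarith [mul_le_mul_of_nonneg_left h5 hcpos.le]
      have h7 : -(c * (F x)^2) / (J x)^2 = -((c * (F x)^2) / (J x)^2) := neg_div _ _
      rw [h7]
      linarith
  have h0mem : (0:ℝ) ∈ Set.Icc (0:ℝ) T1 := ⟨le_refl _, hT1pos.le⟩
  have hT1mem : T1 ∈ Set.Icc (0:ℝ) T1 := ⟨hT1pos.le, le_refl _⟩
  have hfinal := hKanti h0mem hT1mem hT1pos.le
  have hI0 : I 0 = 0 := intervalIntegral.integral_same
  have hK0 : K 0 = (F0)⁻¹ := by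
    have : K 0 = (J 0)⁻¹ + c * 0 := rfl
    rw [this]
    have : J 0 = F 0 + c * I 0 := rfl
    rw [this, hI0, hF00]
    ring
  have hKT1 : K T1 = (J T1)⁻¹ + c * T1 := rfl
  have hJT1pos := hJpos T1 hT1mem
  have hinvpos : 0 < (J T1)⁻¹ := inv_pos.mpr hJT1pos
  have harit : c * T1 = (F0)⁻¹ := by
    rw [hT1def]
    field_simp
  rw [hK0, hKT1, harit] at hfinal
  linarith
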